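/- Let Q ⊆ ℝ^I be a nonempty closed convex set and q(b) the Euclidean projection of b onto Q. For any i and any b, b' ∈ ℝ^I differing only in the i-th coordinate with b'ᵢ > bᵢ, the projections satisfy qᵢ(b') ≥ qᵢ(b), i.e., the i-th coordinate of the projection is monotone nondecreasing in the i-th coordinate of the input. -/

import Mathlib

open scoped RealInnerProductSpace

lemma vi_aux (I : ℕ) (Q : Set (EuclideanSpace ℝ (Fin I)))
    (hQconv : Convex ℝ Q)
    (b v : EuclideanSpace ℝ (Fin I)) (hv : v ∈ Q)
    (hmin : ∀ y ∈ Q, ‖b - v‖ ≤ ‖b - y‖) :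
    ∀ w ∈ Q, ⟪b - v, w - v⟫ ≤ 0 := by
  haveI : Nonempty Q := ⟨⟨v, hv⟩⟩
  rw [← norm_eq_iInf_iff_real_inner_le_zero hQconv hv]
  apply le_antisymm
  · exact le_ciInf fun w => hmin w w.2
  · exact ciInf_le ⟨0, by rintro x ⟨w, rfl⟩; exact norm_nonneg _⟩ (⟨v, hv⟩ : Q)

/-- For Euclidean projection q(·) onto a nonempty closed convex set
Q ⊆ ℝ^I, if b and b' differ only in coordinate i with b'ᵢ > bᵢ, then
qᵢ(b') ≥ qᵢ(b). -/
theorem stmt10 (I : ℕ) (Q : Set (EuclideanSpace ℝ (Fin I)))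
    (hQne : Q.Nonempty) (hQc : IsClosed Q) (hQconv : Convex ℝ Q)
    (q : EuclideanSpace ℝ (Fin I) → EuclideanSpace ℝ (Fin I))
    (hproj : ∀ b, q b ∈ Q ∧ ∀ y ∈ Q, ‖b - q b‖ ≤ ‖b - y‖)
    (i : Fin I) (b b' : EuclideanSpace ℝ (Fin I))
    (hdiff : ∀ j, j ≠ i → b' j = b j) (hlt : b i < b' i) :
    q b i ≤ q b' i := by
  set u := q b with hu
  set u' := q b' with hu'
  have h1 : ⟪b - u, u' - u⟫ ≤ 0 :=
    vi_aux I Q hQconv b u (hproj b).1 (hproj b).2 u' (hproj b').1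
  have h2 : ⟪b' - u', u - u'⟫ ≤ 0 :=
    vi_aux I Q hQconv b' u' (hproj b').1 (hproj b').2 u (hproj b).1
  have key : ⟪b' - b, u' - u⟫ ≥ ‖u' - u‖ ^ 2 := by
    have h2' : ⟪u' - b', u' - u⟫ ≤ 0 := by
      have := h2
      rw [show (u : EuclideanSpace ℝ (Fin I)) - u' = -(u' - u) by abel,
        inner_neg_right] at this
      rw [show (u' : EuclideanSpace ℝ (Fin I)) - b' = -(b' - u') by abel,
        inner_neg_left]
      linarith
    have expand : ⟪b' - b, u' - u⟫ =
        ‖u' - u‖ ^ 2 - ⟪b - u, u' - u⟫ - ⟪u' - b', u' - u⟫ := by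
      rw [← @real_inner_self_eq_norm_sq]
      rw [← inner_sub_left, ← inner_sub_left]
      congr 1
      abel
    rw [expand]
    nlinarith
  -- compute the inner product coordinatewise
  have hcoord : ⟪b' - b, u' - u⟫ = (b' i - b i) * (u' i - u i) := by
    rw [PiLp.inner_apply]
    rw [Finset.sum_eq_single i]
    · simp [RCLike.inner_apply]; ring
    · intro j _ hj
      have : b' j = b j := hdiff j hj
      simp [RCLike.inner_apply, this]
    · simp
  have hsq : (0:ℝ) ≤ ‖u' - u‖ ^ 2 := sq_nonneg _
  rw [hcoord] at key
  nlinarith
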